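/- arXiv:2311.02292 — 3 statements merged into one kernel-verified Lean document; each statement's English description precedes it below -/
import Mathlib

section
/- Let A ∈ M_n(ℝ) be Hurwitz (all eigenvalues of A over ℂ have negative real part) and let G ∈ M_n(ℝ). Then the infinite-horizon Gramian P∞ := ∫₀^{+∞} exp(tA) G exp(tAᵀ) dt converges (the integral exists entrywise), and P∞ satisfies the algebraic Lyapunov equation A P∞ + P∞ Aᵀ + G = 0. -/
open Matrix MeasureTheory NormedSpace Polynomial Filter

section Aux

attribute [local instance] Matrix.linftyOpNormedAddCommGroup Matrix.linftyOpNormedRing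
  Matrix.linftyOpNormedAlgebra

variable {N : ℕ}

lemma eig_exists {B : Matrix (Fin N) (Fin N) ℂ} {μ : ℂ} (h : μ ∈ spectrum ℂ B) :
    ∃ v : Fin N → ℂ, v ≠ 0 ∧ B *ᵥ v = μ • v := by
  rw [spectrum.mem_iff] at h
  have hdet : (algebraMap ℂ (Matrix (Fin N) (Fin N) ℂ) μ - B).det = 0 := by
    by_contra hd
    exact h ((Matrix.isUnit_iff_isUnit_det _).2 (Ne.isUnit hd))
  obtain ⟨v, hv0, hv⟩ := (Matrix.exists_mulVec_eq_zero_iff).2 hdet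
  refine ⟨v, hv0, ?_⟩
  have : algebraMap ℂ (Matrix (Fin N) (Fin N) ℂ) μ *ᵥ v - B *ᵥ v = 0 := by
    rw [← Matrix.sub_mulVec, hv]
  have h2 : algebraMap ℂ (Matrix (Fin N) (Fin N) ℂ) μ *ᵥ v = μ • v := by
    ext i; simp [Matrix.algebraMap_eq_diagonal, Matrix.mulVec_diagonal]
  rw [h2] at this
  have := sub_eq_zero.mp this
  exact this.symm

lemma aeval_mulVec {B : Matrix (Fin N) (Fin N) ℂ} {μ : ℂ} {v : Fin N → ℂ}
    (hv : B *ᵥ v = μ • v) (p : ℂ[X]) : (Polynomial.aeval B p) *ᵥ v = p.eval μ • v := by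
  induction p using Polynomial.induction_on' with
  | add p q hp hq => rw [map_add, Matrix.add_mulVec, hp, hq, eval_add, add_smul]
  | monomial k a =>
    have hpow : ∀ k : ℕ, (B ^ k) *ᵥ v = (μ ^ k) • v := by
      intro k
      induction k with
      | zero => simp
      | succ m ih =>
        rw [pow_succ, ← Matrix.mulVec_mulVec, hv, Matrix.mulVec_smul, ih, smul_smul, pow_succ]
        ring_nf
    rw [aeval_monomial, eval_monomial, ← Matrix.mulVec_mulVec, hpow,
      Matrix.mulVec_smul]
    have : (algebraMap ℂ (Matrix (Fin N) (Fin N) ℂ)) a *ᵥ v = a • v := by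
      ext i; simp [Matrix.algebraMap_eq_diagonal, Matrix.mulVec_diagonal]
    rw [this, smul_smul, mul_comm]

lemma pow_mulVec {B : Matrix (Fin N) (Fin N) ℂ} {μ : ℂ} {v : Fin N → ℂ}
    (hv : B *ᵥ v = μ • v) (k : ℕ) : (B ^ k) *ᵥ v = (μ ^ k) • v := by
  induction k with
  | zero => simp
  | succ m ih =>
    rw [pow_succ, ← Matrix.mulVec_mulVec, hv, Matrix.mulVec_smul, ih, smul_smul, pow_succ]
    ring_nf

lemma exp_mulVec {B : Matrix (Fin N) (Fin N) ℂ} {μ : ℂ} {v : Fin N → ℂ}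
    (hv : B *ᵥ v = μ • v) : (exp B) *ᵥ v = Complex.exp μ • v := by
  classical
  let L : Matrix (Fin N) (Fin N) ℂ →ₗ[ℂ] (Fin N → ℂ) :=
    { toFun := fun M => M *ᵥ v
      map_add' := fun M M' => Matrix.add_mulVec _ _ _
      map_smul' := fun c M => Matrix.smul_mulVec c M v }
  have hL : Continuous L := L.continuous_of_finiteDimensional
  have hsum : Summable fun k : ℕ => (k.factorial⁻¹ : ℂ) • B ^ k := expSeries_summable' B
  have hmap : L (exp B) = ∑' k : ℕ, L ((k.factorial⁻¹ : ℂ) • B ^ k) := by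
    rw [exp_eq_tsum ℂ]
    exact (hsum.hasSum.map L.toAddMonoidHom hL).tsum_eq.symm
  have hterm : ∀ k : ℕ, L ((k.factorial⁻¹ : ℂ) • B ^ k)
      = ((k.factorial⁻¹ : ℂ) * μ ^ k) • v := by
    intro k
    show ((k.factorial⁻¹ : ℂ) • B ^ k) *ᵥ v = _
    rw [Matrix.smul_mulVec, pow_mulVec hv, smul_smul]
  have hsum2 : Summable fun k : ℕ => (k.factorial⁻¹ : ℂ) * μ ^ k := by
    simpa [smul_eq_mul] using expSeries_summable' (𝕂 := ℂ) μ
  calc (exp B) *ᵥ v = L (exp B) := rfl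
    _ = ∑' k : ℕ, ((k.factorial⁻¹ : ℂ) * μ ^ k) • v := by rw [hmap]; exact tsum_congr hterm
    _ = (∑' k : ℕ, (k.factorial⁻¹ : ℂ) * μ ^ k) • v := hsum2.tsum_smul_const v
    _ = Complex.exp μ • v := by
        congr 1
        rw [Complex.exp_eq_exp_ℂ, exp_eq_tsum ℂ]
        simp [smul_eq_mul]

lemma exp_mem_adjoin (B : Matrix (Fin N) (Fin N) ℂ) :
    ∃ p : ℂ[X], Polynomial.aeval B p = exp B := by
  suffices h : exp B ∈ Algebra.adjoin ℂ ({B} : Set (Matrix (Fin N) (Fin N) ℂ)) by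
    rw [Algebra.adjoin_singleton_eq_range_aeval] at h
    exact h
  let S := Subalgebra.toSubmodule (Algebra.adjoin ℂ ({B} : Set (Matrix (Fin N) (Fin N) ℂ)))
  have hclosed : IsClosed (S : Set (Matrix (Fin N) (Fin N) ℂ)) :=
    Submodule.closed_of_finiteDimensional S
  have hsum : Summable fun k : ℕ => (k.factorial⁻¹ : ℂ) • B ^ k := expSeries_summable' B
  have htend := hsum.hasSum.tendsto_sum_nat
  rw [exp_eq_tsum ℂ]
  refine hclosed.mem_of_tendsto htend (Filter.Eventually.of_forall fun m => ?_)
  refine Submodule.sum_mem S fun k _ => Submodule.smul_mem S _ ?_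
  exact Subalgebra.pow_mem _ (Algebra.self_mem_adjoin_singleton ℂ B) k

lemma spectrum_exp_eq (hN : 0 < N) (B : Matrix (Fin N) (Fin N) ℂ) :
    spectrum ℂ (exp B) = Complex.exp '' spectrum ℂ B := by
  haveI : Nonempty (Fin N) := Fin.pos_iff_nonempty.mp hN
  obtain ⟨p, hp⟩ := exp_mem_adjoin B
  have hne : (spectrum ℂ B).Nonempty := spectrum.nonempty B
  have hmap := spectrum.map_polynomial_aeval_of_nonempty B p hne
  rw [hp] at hmap
  rw [hmap]
  refine Set.image_congr fun μ hμ => ?_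
  obtain ⟨v, hv0, hv⟩ := eig_exists hμ
  have h1 := aeval_mulVec hv p
  rw [hp, exp_mulVec hv] at h1
  obtain ⟨i, hi⟩ := Function.ne_iff.mp hv0
  have h2 := congrFun h1 i
  simp only [Pi.smul_apply, smul_eq_mul] at h2
  exact (mul_right_cancel₀ (by simpa using hi) h2).symm

lemma norm_exp_pow_bound (B : Matrix (Fin N) (Fin N) ℂ) {c : ℝ}
    (hρ : spectralRadius ℂ (exp B) < ENNReal.ofReal (Real.exp c)) :
    ∃ C₀ : ℝ, 1 ≤ C₀ ∧ ∀ k : ℕ, ‖exp B ^ k‖ ≤ C₀ * Real.exp (c * k) := by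
  have hgel := spectrum.pow_norm_pow_one_div_tendsto_nhds_spectralRadius (exp B)
  have hev : ∀ᶠ k : ℕ in atTop,
      ENNReal.ofReal (‖exp B ^ k‖ ^ (1 / (k:ℝ))) < ENNReal.ofReal (Real.exp c) :=
    hgel.eventually_lt_const hρ
  have hev2 : ∀ᶠ k : ℕ in atTop, ‖exp B ^ k‖ ≤ Real.exp (c * k) := by
    filter_upwards [hev, Filter.eventually_ge_atTop 1] with k hk hk1
    have hklt : ‖exp B ^ k‖ ^ (1 / (k:ℝ)) < Real.exp c := by
      have := (ENNReal.ofReal_lt_ofReal_iff (Real.exp_pos c)).mp hk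
      exact this
    have hk0 : (k:ℝ) ≠ 0 := by positivity
    have h1 : (‖exp B ^ k‖ ^ (1 / (k:ℝ))) ^ (k:ℝ) ≤ (Real.exp c) ^ (k:ℝ) :=
      Real.rpow_le_rpow (Real.rpow_nonneg (norm_nonneg _) _) hklt.le (by positivity)
    rw [← Real.rpow_mul (norm_nonneg _), one_div, inv_mul_cancel₀ hk0, Real.rpow_one] at h1
    calc ‖exp B ^ k‖ ≤ (Real.exp c) ^ (k:ℝ) := h1
      _ = Real.exp (c * k) := by
          rw [← Real.exp_mul]
  obtain ⟨K, hK⟩ := Filter.eventually_atTop.mp hev2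
  refine ⟨1 + ∑ k ∈ Finset.range K, ‖exp B ^ k‖ * Real.exp (-(c * k)), ?_, ?_⟩
  · have : (0:ℝ) ≤ ∑ k ∈ Finset.range K, ‖exp B ^ k‖ * Real.exp (-(c * k)) :=
      Finset.sum_nonneg fun k _ => by positivity
    linarith
  · intro k
    rcases le_or_gt K k with h | h
    · have := hK k h
      nlinarith [Real.exp_pos (c * k),
        Finset.sum_nonneg (fun k _ => by positivity :
          ∀ k ∈ Finset.range K, (0:ℝ) ≤ ‖exp B ^ k‖ * Real.exp (-(c * k)))]
    · have hmem : k ∈ Finset.range K := Finset.mem_range.mpr h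
      have hle : ‖exp B ^ k‖ * Real.exp (-(c * k)) ≤
          ∑ j ∈ Finset.range K, ‖exp B ^ j‖ * Real.exp (-(c * j)) :=
        Finset.single_le_sum (f := fun j : ℕ => ‖exp B ^ j‖ * Real.exp (-(c * (j:ℝ))))
          (fun j _ => by positivity) hmem
      have hepos := Real.exp_pos (c * k)
      have h2 : Real.exp (-(c * k)) * Real.exp (c * k) = 1 := by
        rw [← Real.exp_add]; simp
      nlinarith [norm_nonneg (exp B ^ k)]

lemma exp_decay_complex (hN : 0 < N) (B : Matrix (Fin N) (Fin N) ℂ)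
    (hH : ∀ z ∈ spectrum ℂ B, z.re < 0) :
    ∃ δ C : ℝ, 0 < δ ∧ 0 < C ∧
      ∀ t : ℝ, 0 ≤ t → ‖exp ((t:ℂ) • B)‖ ≤ C * Real.exp (-δ * t) := by
  haveI : Nonempty (Fin N) := Fin.pos_iff_nonempty.mp hN
  have hcomp : IsCompact (spectrum ℂ B) := spectrum.isCompact B
  have hne : (spectrum ℂ B).Nonempty := spectrum.nonempty B
  obtain ⟨z₀, hz₀mem, hz₀max⟩ := hcomp.exists_isMaxOn hne Complex.continuous_re.continuousOn
  set c : ℝ := z₀.re / 2 with hc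
  have hz₀ : z₀.re < 0 := hH z₀ hz₀mem
  have hcneg : c < 0 := by rw [hc]; linarith
  have hρ : spectralRadius ℂ (exp B) < ENNReal.ofReal (Real.exp c) := by
    have hle : spectralRadius ℂ (exp B) ≤ ENNReal.ofReal (Real.exp z₀.re) := by
      rw [spectralRadius]
      refine iSup₂_le fun μ hμ => ?_
      rw [spectrum_exp_eq hN B] at hμ
      obtain ⟨z, hz, rfl⟩ := hμ
      have habs : ‖Complex.exp z‖ = Real.exp z.re := Complex.norm_exp z
      rw [← ENNReal.ofReal_coe_nnreal]
      refine ENNReal.ofReal_le_ofReal ?_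
      rw [coe_nnnorm, habs]
      exact Real.exp_le_exp.mpr (hz₀max hz)
    refine lt_of_le_of_lt hle ?_
    rw [ENNReal.ofReal_lt_ofReal_iff (Real.exp_pos c)]
    refine Real.exp_lt_exp.mpr ?_
    rw [hc]; linarith
  obtain ⟨C₀, hC₀, hpow⟩ := norm_exp_pow_bound B hρ
  have hcont : Continuous fun s : ℝ => exp ((s:ℂ) • B) :=
    exp_continuous.comp ((Complex.continuous_ofReal.smul continuous_const))
  obtain ⟨M, hM⟩ := (isCompact_Icc (a := (0:ℝ)) (b := 1)).exists_bound_of_continuousOn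
    hcont.continuousOn
  set M' : ℝ := max M 1 with hM'
  have hM'pos : 0 < M' := lt_of_lt_of_le one_pos (le_max_right _ _)
  refine ⟨-c, C₀ * M' * Real.exp (-c), by linarith, by positivity, ?_⟩
  intro t ht
  set k : ℕ := ⌊t⌋₊ with hk
  set s : ℝ := t - k with hs
  have hs0 : 0 ≤ s := by
    rw [hs]; exact sub_nonneg.mpr (Nat.floor_le ht)
  have hs1 : s ≤ 1 := by
    rw [hs]
    have := Nat.lt_floor_add_one t
    linarith
  have hsplit : exp ((t:ℂ) • B) = exp B ^ k * exp ((s:ℂ) • B) := by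
    have h1 : (t:ℂ) • B = ((k:ℝ):ℂ) • B + ((s:ℂ)) • B := by
      rw [← add_smul]
      norm_cast
      rw [hs]
      ring_nf
    rw [h1, Matrix.exp_add_of_commute _ _ (((Commute.refl B).smul_left _).smul_right _)]
    congr 1
    have h2 : ((k:ℝ):ℂ) • B = (k : ℕ) • B := by
      rw [← Nat.cast_smul_eq_nsmul ℂ k B]
      norm_num
    rw [h2, Matrix.exp_nsmul]
  rw [hsplit]
  have h3 : ‖exp B ^ k * exp ((s:ℂ) • B)‖ ≤ ‖exp B ^ k‖ * ‖exp ((s:ℂ) • B)‖ :=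
    norm_mul_le _ _
  have h4 : ‖exp ((s:ℂ) • B)‖ ≤ M' := le_trans (hM s ⟨hs0, hs1⟩) (le_max_left _ _)
  have h5 : ‖exp B ^ k‖ ≤ C₀ * Real.exp (c * k) := hpow k
  have h6 : Real.exp (c * k) ≤ Real.exp (-c) * Real.exp (c * t) := by
    rw [← Real.exp_add]
    refine Real.exp_le_exp.mpr ?_
    have : (k:ℝ) = t - s := by rw [hs]; ring
    rw [this]
    nlinarith
  calc ‖exp B ^ k * exp ((s:ℂ) • B)‖ ≤ ‖exp B ^ k‖ * ‖exp ((s:ℂ) • B)‖ := h3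
    _ ≤ (C₀ * Real.exp (c * k)) * M' := by
        apply mul_le_mul h5 h4 (norm_nonneg _)
        positivity
    _ ≤ (C₀ * (Real.exp (-c) * Real.exp (c * t))) * M' := by
        have hC₀0 : (0:ℝ) < C₀ := lt_of_lt_of_le one_pos hC₀
        gcongr
    _ = C₀ * M' * Real.exp (-c) * Real.exp (-(-c) * t) := by ring_nf
  

lemma entry_le_linfty_norm (M : Matrix (Fin N) (Fin N) ℂ) (i j : Fin N) :
    ‖M i j‖ ≤ ‖M‖ := by
  rw [Matrix.linfty_opNorm_def]
  have h1 : ‖M i j‖₊ ≤ ∑ l, ‖M i l‖₊ :=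
    Finset.single_le_sum (f := fun l => ‖M i l‖₊) (fun _ _ => zero_le) (Finset.mem_univ j)
  have h2 : (∑ l, ‖M i l‖₊) ≤ Finset.univ.sup fun i' => ∑ l, ‖M i' l‖₊ :=
    Finset.le_sup (f := fun i' => ∑ l, ‖M i' l‖₊) (Finset.mem_univ i)
  exact_mod_cast h1.trans h2

lemma exp_entry_decay (hN : 0 < N) (A : Matrix (Fin N) (Fin N) ℝ)
    (hH : ∀ z ∈ spectrum ℂ (A.map (fun x : ℝ => (x:ℂ))), z.re < 0) :
    ∃ δ C : ℝ, 0 < δ ∧ 0 < C ∧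
      ∀ t : ℝ, 0 ≤ t → ∀ i j, |(exp (t • A)) i j| ≤ C * Real.exp (-δ * t) := by
  set B := A.map (fun x : ℝ => (x:ℂ)) with hB
  obtain ⟨δ, C, hδ, hC, hbound⟩ := exp_decay_complex hN B hH
  refine ⟨δ, C, hδ, hC, fun t ht i j => ?_⟩
  have hmap : (exp (t • A)).map (fun x : ℝ => (x:ℂ)) = exp ((t:ℂ) • B) := by
    have hcont : Continuous ((algebraMap ℝ ℂ).mapMatrix :
        Matrix (Fin N) (Fin N) ℝ →+* Matrix (Fin N) (Fin N) ℂ) := by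
      show Continuous fun M : Matrix (Fin N) (Fin N) ℝ => M.map (algebraMap ℝ ℂ)
      exact continuous_id.matrix_map (continuous_algebraMap ℝ ℂ)
    have h1 := map_exp ((algebraMap ℝ ℂ).mapMatrix :
        Matrix (Fin N) (Fin N) ℝ →+* Matrix (Fin N) (Fin N) ℂ) hcont (t • A)
    have h2 : ((algebraMap ℝ ℂ).mapMatrix : _ →+* _) (t • A) = (t:ℂ) • B := by
      ext i' j'
      simp [RingHom.mapMatrix_apply, Matrix.map_apply, hB, smul_eq_mul]
    have h3 : ((algebraMap ℝ ℂ).mapMatrix : _ →+* _) (exp (t • A))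
        = (exp (t • A)).map (fun x : ℝ => (x:ℂ)) := by
      ext i' j'
      simp [RingHom.mapMatrix_apply, Matrix.map_apply]
    rw [← h3, ← h2]
    exact h1
  have habs : |(exp (t • A)) i j| = ‖(exp ((t:ℂ) • B)) i j‖ := by
    rw [← hmap]
    simp [Matrix.map_apply]
  rw [habs]
  exact (entry_le_linfty_norm _ i j).trans (hbound t ht)

variable {n : ℕ}

/-- The integrand. -/
noncomputable def lyapF (A G : Matrix (Fin n) (Fin n) ℝ) (t : ℝ) : Matrix (Fin n) (Fin n) ℝ :=
  exp (t • A) * G * exp (t • Aᵀ)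

lemma lyapF_continuous (A G : Matrix (Fin n) (Fin n) ℝ) : Continuous (lyapF A G) := by
  have hEc : Continuous fun t : ℝ => exp (t • A) :=
    exp_continuous.comp (continuous_id.smul continuous_const)
  have hEc' : Continuous fun t : ℝ => exp (t • Aᵀ) :=
    exp_continuous.comp (continuous_id.smul continuous_const)
  exact (hEc.matrix_mul continuous_const).matrix_mul hEc'

lemma lyapF_hasDerivAt (A G : Matrix (Fin n) (Fin n) ℝ) (t : ℝ) :
    HasDerivAt (lyapF A G) (A * lyapF A G t + lyapF A G t * Aᵀ) t := by
  have h1 : HasDerivAt (fun u : ℝ => exp (u • A)) (A * exp (t • A)) t :=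
    hasDerivAt_exp_smul_const' A t
  have h2 : HasDerivAt (fun u : ℝ => exp (u • Aᵀ)) (exp (t • Aᵀ) * Aᵀ) t :=
    hasDerivAt_exp_smul_const Aᵀ t
  have h3 := (h1.mul_const G).mul h2
  refine h3.congr_deriv ?_
  unfold lyapF
  noncomm_ring

lemma lyapF_entry_hasDerivAt (A G : Matrix (Fin n) (Fin n) ℝ) (t : ℝ) (i j : Fin n) :
    HasDerivAt (fun u => lyapF A G u i j) ((A * lyapF A G t + lyapF A G t * Aᵀ) i j) t := by
  let L : Matrix (Fin n) (Fin n) ℝ →ₗ[ℝ] ℝ :=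
    { toFun := fun M => M i j, map_add' := fun _ _ => rfl, map_smul' := fun _ _ => rfl }
  exact L.toContinuousLinearMap.hasFDerivAt.comp_hasDerivAt t (lyapF_hasDerivAt A G t)

lemma lyapF_entry_bound {A : Matrix (Fin n) (Fin n) ℝ} (G : Matrix (Fin n) (Fin n) ℝ)
    {δ C : ℝ} (hC : 0 < C)
    (hdecay : ∀ t : ℝ, 0 ≤ t → ∀ i j, |(exp (t • A)) i j| ≤ C * Real.exp (-δ * t)) :
    ∀ t : ℝ, 0 ≤ t → ∀ i j, |lyapF A G t i j| ≤
      (C * C * ∑ k, ∑ l, |G k l|) * Real.exp (-(2 * δ) * t) := by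
  intro t ht i j
  have hEt : exp (t • Aᵀ) = (exp (t • A))ᵀ := by
    rw [← Matrix.transpose_smul, Matrix.exp_transpose]
  have hexpand : lyapF A G t i j = ∑ l, ∑ k, exp (t • A) i k * G k l * exp (t • A) j l := by
    unfold lyapF
    rw [hEt]
    simp [Matrix.mul_apply, Finset.sum_mul]
  rw [hexpand]
  have hstep : ∀ l k : Fin n, |exp (t • A) i k * G k l * exp (t • A) j l| ≤
      C * Real.exp (-δ * t) * |G k l| * (C * Real.exp (-δ * t)) := by
    intro l k
    rw [abs_mul, abs_mul]
    have h1 := hdecay t ht i k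
    have h2 := hdecay t ht j l
    have hG : (0:ℝ) ≤ |G k l| := abs_nonneg _
    have he : (0:ℝ) < Real.exp (-δ * t) := Real.exp_pos _
    refine mul_le_mul (mul_le_mul h1 le_rfl hG (by positivity)) h2 (abs_nonneg _) (by positivity)
  calc |∑ l, ∑ k, exp (t • A) i k * G k l * exp (t • A) j l|
      ≤ ∑ l, ∑ k, |exp (t • A) i k * G k l * exp (t • A) j l| := by
        refine (Finset.abs_sum_le_sum_abs _ _).trans ?_
        exact Finset.sum_le_sum fun l _ => Finset.abs_sum_le_sum_abs _ _
    _ ≤ ∑ l, ∑ k, C * Real.exp (-δ * t) * |G k l| * (C * Real.exp (-δ * t)) :=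
        Finset.sum_le_sum fun l _ => Finset.sum_le_sum fun k _ => hstep l k
    _ = (C * C * ∑ k, ∑ l, |G k l|) * Real.exp (-(2 * δ) * t) := by
        rw [Finset.sum_comm]
        simp only [Finset.mul_sum, Finset.sum_mul]
        refine Finset.sum_congr rfl fun k _ => Finset.sum_congr rfl fun l _ => ?_
        have : Real.exp (-(2 * δ) * t) = Real.exp (-δ * t) * Real.exp (-δ * t) := by
          rw [← Real.exp_add]; ring_nf
        rw [this]; ring

/-- If `A ∈ M_n(ℝ)` is Hurwitz and `G ∈ M_n(ℝ)`, then the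
infinite-horizon Gramian `P∞ := ∫₀^∞ exp(tA) G exp(tAᵀ) dt` converges (entrywise) and
satisfies the algebraic Lyapunov equation `A P∞ + P∞ Aᵀ + G = 0`. -/
theorem stmt_11 (n : ℕ) (A G : Matrix (Fin n) (Fin n) ℝ)
    (hHurwitz : ∀ z ∈ spectrum ℂ (A.map (fun x : ℝ => (x : ℂ))), z.re < 0)
    (Pinf : Matrix (Fin n) (Fin n) ℝ)
    (hPinf : ∀ i j, Pinf i j =
      ∫ t in Set.Ioi (0:ℝ),
        (NormedSpace.exp (t • A) * G * NormedSpace.exp (t • Aᵀ)) i j) :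
    (∀ i j, IntegrableOn
      (fun t : ℝ =>
        (NormedSpace.exp (t • A) * G * NormedSpace.exp (t • Aᵀ)) i j)
      (Set.Ioi 0)) ∧
    A * Pinf + Pinf * Aᵀ + G = 0 := by
  rcases Nat.eq_zero_or_pos n with hn | hn
  · subst hn
    exact ⟨fun i => i.elim0, Subsingleton.elim _ _⟩
  obtain ⟨δ, C, hδ, hC, hdecay⟩ := exp_entry_decay hn A hHurwitz
  have hfb := lyapF_entry_bound G hC hdecay
  set K : ℝ := C * C * ∑ k, ∑ l, |G k l| with hK
  -- integrable majorant
  have hgint : IntegrableOn (fun t : ℝ => K * Real.exp (-(2 * δ) * t)) (Set.Ioi 0) :=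
    (exp_neg_integrableOn_Ioi 0 (by linarith : (0:ℝ) < 2 * δ)).const_mul K
  -- Part 1 : integrability of the entries
  have hint : ∀ i j, IntegrableOn (fun t => lyapF A G t i j) (Set.Ioi (0:ℝ)) := by
    intro i j
    refine hgint.mono' (((lyapF_continuous A G).matrix_elem i j).aestronglyMeasurable) ?_
    filter_upwards [ae_restrict_mem measurableSet_Ioi] with t ht
    rw [Real.norm_eq_abs]
    exact hfb t (le_of_lt ht) i j
  -- integrability of the derivative entries
  have hintD : ∀ i j, IntegrableOn
      (fun t => (A * lyapF A G t + lyapF A G t * Aᵀ) i j) (Set.Ioi (0:ℝ)) := by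
    intro i j
    have h1 : IntegrableOn (fun t => ∑ k, A i k * lyapF A G t k j) (Set.Ioi (0:ℝ)) :=
      integrable_finset_sum _ fun k _ => (hint k j).const_mul _
    have h2 : IntegrableOn (fun t => ∑ k, lyapF A G t i k * Aᵀ k j) (Set.Ioi (0:ℝ)) :=
      integrable_finset_sum _ fun k _ => (hint i k).mul_const _
    have heq : (fun t => (A * lyapF A G t + lyapF A G t * Aᵀ) i j)
        = fun t => (∑ k, A i k * lyapF A G t k j) + ∑ k, lyapF A G t i k * Aᵀ k j := by
      funext t
      simp [Matrix.add_apply, Matrix.mul_apply]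
    rw [heq]
    exact h1.add h2
  -- entries tend to zero
  have htend : ∀ i j, Tendsto (fun t => lyapF A G t i j) atTop (nhds 0) := by
    intro i j
    apply squeeze_zero_norm' (a := fun t : ℝ => K * Real.exp (-(2 * δ) * t))
    · filter_upwards [Filter.eventually_ge_atTop (0:ℝ)] with t ht
      rw [Real.norm_eq_abs]
      exact hfb t ht i j
    · have h2 : Tendsto (fun t : ℝ => -(2 * δ) * t) atTop atBot := by
        apply Filter.Tendsto.const_mul_atTop_of_neg (by linarith : -(2 * δ) < 0) tendsto_id
      have h3 := (Real.tendsto_exp_atBot.comp h2).const_mul K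
      simpa using h3
  -- FTC
  have hFTC : ∀ i j, (∫ t in Set.Ioi (0:ℝ), (A * lyapF A G t + lyapF A G t * Aᵀ) i j)
      = -(G i j) := by
    intro i j
    have h := integral_Ioi_of_hasDerivAt_of_tendsto'
      (fun x _ => lyapF_entry_hasDerivAt A G x i j) (hintD i j) (htend i j)
    rw [h]
    have h0 : lyapF A G 0 = G := by
      unfold lyapF
      simp
    rw [h0]
    ring
  refine ⟨fun i j => hint i j, ?_⟩
  ext i j
  have hA : (A * Pinf) i j = ∫ t in Set.Ioi (0:ℝ), ∑ k, A i k * lyapF A G t k j := by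
    rw [Matrix.mul_apply, integral_finset_sum _ (fun k _ => (hint k j).const_mul _)]
    refine Finset.sum_congr rfl fun k _ => ?_
    rw [hPinf k j, ← MeasureTheory.integral_const_mul]
    rfl
  have hAt : (Pinf * Aᵀ) i j = ∫ t in Set.Ioi (0:ℝ), ∑ k, lyapF A G t i k * Aᵀ k j := by
    rw [Matrix.mul_apply, integral_finset_sum _ (fun k _ => (hint i k).mul_const _)]
    refine Finset.sum_congr rfl fun k _ => ?_
    rw [hPinf i k, ← MeasureTheory.integral_mul_const]
    rfl
  have h1 : IntegrableOn (fun t => ∑ k, A i k * lyapF A G t k j) (Set.Ioi (0:ℝ)) :=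
    integrable_finset_sum _ fun k _ => (hint k j).const_mul _
  have h2 : IntegrableOn (fun t => ∑ k, lyapF A G t i k * Aᵀ k j) (Set.Ioi (0:ℝ)) :=
    integrable_finset_sum _ fun k _ => (hint i k).mul_const _
  have key : (A * Pinf) i j + (Pinf * Aᵀ) i j = -(G i j) := by
    rw [hA, hAt, ← integral_add h1 h2, ← hFTC i j]
    refine integral_congr_ae (Filter.Eventually.of_forall fun t => ?_)
    simp [Matrix.add_apply, Matrix.mul_apply]
  simp only [Matrix.add_apply, Matrix.zero_apply]
  rw [key]
  ring

end Aux
end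

section
/- Fix positive integers n and even m. Let α ∈ ℝ^{n×n} be symmetric; let β₁,…,βₙ ∈ ℂ^{n×n} be Hermitian with Θ_ℓ := Im β_ℓ, θ_{jkℓ} := (Θ_ℓ)_{jk}, θ_{ℓ••} := (θ_{ℓjk})_{j,k}, Re β_{ℓ••} := ((Re β)_{ℓjk})_{j,k}; let ℧ := [Θ₁;…;Θₙ] ∈ ℝ^{n²×n} and Θ ⋄ u := [Θ₁u … Θₙu]. Let M ∈ ℝ^{m×n}, N ∈ ℝ^{m}, J := I_{m/2} ⊗ [[0,1],[−1,0]], Ω := I_m + iJ. Define Ã := 2 Θ ⋄ (MᵀJN) + 2 Σ_ℓ Θ_ℓ Mᵀ (M θ_{ℓ••} + J M Re β_{ℓ••}), A(E) := 2(Θ ⋄ E) + Ã, and b := −2 ℧ᵀ col(MᵀJMα). Let μ₀ ∈ ℝⁿ, let P ∈ ℝ^{n×n} be symmetric positive semidefinite, let F ∈ ℝ^{ν×n} with F√P ≠ 0 and Σ := FᵀF, define Λ₀ := 4 ℧ᵀ ((α + Σ_ℓ μ₀,ℓ β_ℓ) ⊗ (MᵀΩM)) ℧ and assume ⟨Σ,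 Re Λ₀⟩ > 0; define Λ̇₀(E) := 4 ℧ᵀ ((Σ_ℓ (A(E)μ₀ + b)_ℓ β_ℓ) ⊗ (MᵀΩM)) ℧ and the objective g(E) := ⟨Σ, 2 A(E)PA(E)ᵀ + 2 A(E)(Re Λ₀ + 2μ₀bᵀ) + Re Λ̇₀(E)⟩ + 2|Fb|². Define R := ℧ᵀ(P ⊗ Σ)℧ and K := ℧ᵀ col(Σ(ÃP + (1/2)Re Λ₀ + bμ₀ᵀ)) + ( ⟨℧Σ℧ᵀ, Re((Σ_j (Σ_ℓ μ₀,ℓ Θ_ℓ)_{jk} β_j) ⊗ (MᵀΩM))⟩ )_{1≤k≤n}. Then a vector E ∈ ℝⁿ is a global minimizer of g over ℝⁿ (equivalently, a global maximizer over ℝⁿ, for each fixed ε > 0, of the approximate decoherence time τ̂(ε) = τ′ε + (1/2)τ″(E)ε² with τ′ := ‖F√P‖²/⟨Σ, Re Λ₀⟩ and τ″(E) := −g(E)(τ′)²/⟨Σ, Re Λ₀⟩) if and only if 2RE + K = 0. -/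
open Matrix
open scoped Kronecker

section

open scoped ComplexOrder

/-- The positive semidefinite square root of a positive semidefinite matrix, as defined in
Mathlib (December 2024) under this name; it has since been removed from Mathlib. -/
noncomputable def Matrix.PosSemidef.sqrt {n : Type*} [Fintype n] [DecidableEq n]
    {𝕜 : Type*} [RCLike 𝕜] {A : Matrix n n 𝕜} (hA : A.PosSemidef) : Matrix n n 𝕜 :=
  (hA.1.eigenvectorUnitary : Matrix n n 𝕜) *
    diagonal (fun i => ((√(hA.1.eigenvalues i) : ℝ) : 𝕜)) *
    (star hA.1.eigenvectorUnitary : Matrix n n 𝕜)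

end

lemma stmt18_sqrt_mul_self {n : ℕ} {P : Matrix (Fin n) (Fin n) ℝ} (hP : P.PosSemidef) :
    hP.sqrt * hP.sqrt = P := by
  have hspec := hP.1.spectral_theorem
  rw [Unitary.conjStarAlgAut_apply] at hspec
  have hU := Unitary.coe_star_mul_self hP.1.eigenvectorUnitary
  unfold Matrix.PosSemidef.sqrt
  conv_rhs => rw [hspec]
  simp only [Matrix.mul_assoc]
  rw [← Matrix.mul_assoc (star (hP.1.eigenvectorUnitary : Matrix (Fin n) (Fin n) ℝ)), hU,
    Matrix.one_mul, ← Matrix.mul_assoc (diagonal _), diagonal_mul_diagonal]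
  congr 3
  funext i
  simp [Real.mul_self_sqrt (hP.eigenvalues_nonneg i)]

lemma stmt18_sqrt_transpose {n : ℕ} {P : Matrix (Fin n) (Fin n) ℝ} (hP : P.PosSemidef) :
    (hP.sqrt)ᵀ = hP.sqrt := by
  rw [← Matrix.conjTranspose_eq_transpose_of_trivial]
  unfold Matrix.PosSemidef.sqrt
  simp [Matrix.star_eq_conjTranspose, Matrix.mul_assoc]

lemma stmt18_dot_symm {n : ℕ} (R : Matrix (Fin n) (Fin n) ℝ) (hsym : Rᵀ = R)
    (x y : Fin n → ℝ) : x ⬝ᵥ R *ᵥ y = y ⬝ᵥ R *ᵥ x := by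
  rw [Matrix.dotProduct_mulVec, show x ᵥ* R = R *ᵥ x from by
    conv_lhs => rw [← hsym]
    rw [Matrix.vecMul_transpose]]
  exact dotProduct_comm _ _

lemma stmt18_quad_iff {n : ℕ} (R : Matrix (Fin n) (Fin n) ℝ) (hsym : Rᵀ = R)
    (hpsd : ∀ x : Fin n → ℝ, 0 ≤ x ⬝ᵥ R *ᵥ x) (K : Fin n → ℝ) (c : ℝ)
    (g : (Fin n → ℝ) → ℝ)
    (hg : ∀ E, g E = 8 * (E ⬝ᵥ R *ᵥ E) + 8 * (K ⬝ᵥ E) + c) (E : Fin n → ℝ) :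
    (∀ E', g E ≤ g E') ↔ (2 : ℝ) • (R *ᵥ E) + K = 0 := by
  have expand : ∀ v : Fin n → ℝ,
      g (E + v) - g E = 8 * (v ⬝ᵥ R *ᵥ v) + 8 * (((2 : ℝ) • (R *ᵥ E) + K) ⬝ᵥ v) := by
    intro v
    rw [hg, hg]
    have h1 : (E + v) ⬝ᵥ R *ᵥ (E + v)
        = E ⬝ᵥ R *ᵥ E + v ⬝ᵥ R *ᵥ v + 2 * (v ⬝ᵥ R *ᵥ E) := by
      simp only [Matrix.mulVec_add, dotProduct_add, add_dotProduct,
        stmt18_dot_symm R hsym E v]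
      ring
    have h2 : K ⬝ᵥ (E + v) = K ⬝ᵥ E + K ⬝ᵥ v := dotProduct_add _ _ _
    have h3 : ((2 : ℝ) • (R *ᵥ E) + K) ⬝ᵥ v
        = 2 * (v ⬝ᵥ R *ᵥ E) + K ⬝ᵥ v := by
      rw [add_dotProduct, smul_dotProduct, dotProduct_comm]
      simp [smul_eq_mul]
    rw [h1, h2, h3]; ring
  constructor
  · intro hmin
    by_contra hw
    set w : Fin n → ℝ := (2 : ℝ) • (R *ᵥ E) + K with hwdef
    have hs0 : 0 ≤ w ⬝ᵥ w := Finset.sum_nonneg fun i _ => mul_self_nonneg _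
    have hsne : w ⬝ᵥ w ≠ 0 := fun h => hw (dotProduct_self_eq_zero.mp h)
    have hs : 0 < w ⬝ᵥ w := lt_of_le_of_ne hs0 (Ne.symm hsne)
    set a := w ⬝ᵥ R *ᵥ w with ha
    have ha0 : 0 ≤ a := hpsd w
    set s := w ⬝ᵥ w with hsdef
    set t : ℝ := -s / (a + s) with ht
    have hden : 0 < a + s := by linarith
    have key : 0 ≤ g (E + t • w) - g E := by linarith [hmin (E + t • w)]
    rw [expand] at key
    have e1 : (t • w) ⬝ᵥ R *ᵥ (t • w) = t ^ 2 * a := by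
      rw [smul_dotProduct, Matrix.mulVec_smul, dotProduct_smul]
      simp [smul_eq_mul]; ring
    have e2 : w ⬝ᵥ t • w = t * s := by
      rw [dotProduct_smul]; simp [smul_eq_mul, hsdef]
    rw [e1, e2] at key
    have hneg : 8 * (t ^ 2 * a) + 8 * (t * s) < 0 := by
      have htneg : t < 0 := div_neg_of_neg_of_pos (by linarith) hden
      have h2 : 0 < t * a + s := by
        have hta : t * a = -s * a / (a + s) := by rw [ht]; ring
        rw [hta, div_add' _ _ _ (ne_of_gt hden)]
        apply div_pos _ hden
        nlinarith
      nlinarith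
    linarith
  · intro h0 E'
    have hv := expand (E' - E)
    rw [h0, zero_dotProduct] at hv
    have hEE : E + (E' - E) = E' := by abel
    rw [hEE] at hv
    nlinarith [hpsd (E' - E)]

/-- Theorem 1 of the paper: for the quasilinear QSDE data built from the
structure constants `α`, `β` (sections `β ℓ`, `(β ℓ) j k = β_{jkℓ}`, CCR matrices
`Θ ℓ = Im β_ℓ`), coupling parameters `M`, `N` (field dimension `m = 2p` even), Ito
matrices `J`, `Ω`, drift matrix `A(E) = 2(Θ ⋄ E) + Ã` and drift vector `b`, initial
data `μ₀`, `P ⪰ 0`, weighting `Σ = FᵀF` with `F√P ≠ 0`, diffusion data `Λ₀`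
(with `⟨Σ, Re Λ₀⟩ > 0`) and `Λ̇₀(E)`, the energy vector `E` is a global minimizer of
`g(E) = ⟨Σ, 2A(E)PA(E)ᵀ + 2A(E)(Re Λ₀ + 2μ₀bᵀ) + Re Λ̇₀(E)⟩ + 2|Fb|²` over `ℝⁿ`
(equivalently, for each `ε > 0`, a global maximizer of the approximate decoherence time
`τ̂(ε) = τ′ε + ½τ″(E)ε²`) if and only if `2RE + K = 0`. -/
theorem stmt_18 (n p ν : ℕ) (hn : 1 ≤ n) (hp : 1 ≤ p)
    (α : Matrix (Fin n) (Fin n) ℝ) (hα : α.IsSymm)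
    (β : Fin n → Matrix (Fin n) (Fin n) ℂ) (hβ : ∀ ℓ, (β ℓ).IsHermitian)
    (Θ : Fin n → Matrix (Fin n) (Fin n) ℝ) (hΘ : ∀ ℓ, Θ ℓ = (β ℓ).map Complex.im)
    (mho : Matrix (Fin n × Fin n) (Fin n) ℝ)
    (hmho : ∀ ℓ j k, mho (ℓ, j) k = Θ ℓ j k)
    (col : Matrix (Fin n) (Fin n) ℝ → (Fin n × Fin n) → ℝ)
    (hcol : ∀ X k j, col X (k, j) = X j k)
    (diam : (Fin n → ℝ) → Matrix (Fin n) (Fin n) ℝ)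
    (hdiam : ∀ u j k, diam u j k = (Θ k *ᵥ u) j)
    (M : Matrix (Fin p × Fin 2) (Fin n) ℝ) (N : Fin p × Fin 2 → ℝ)
    (J : Matrix (Fin p × Fin 2) (Fin p × Fin 2) ℝ)
    (hJ : J = (1 : Matrix (Fin p) (Fin p) ℝ) ⊗ₖ !![0, 1; -1, 0])
    (Ω : Matrix (Fin p × Fin 2) (Fin p × Fin 2) ℂ)
    (hΩ : Ω = 1 + Complex.I • J.map (fun x : ℝ => (x : ℂ)))
    -- θ_{ℓ••} and Re β_{ℓ••} (recall θ_{jkℓ} = (Θ ℓ) j k, β_{jkℓ} = (β ℓ) j k)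
    (θldd Reβldd : Fin n → Matrix (Fin n) (Fin n) ℝ)
    (hθldd : ∀ ℓ j k, θldd ℓ j k = Θ k ℓ j)
    (hReβldd : ∀ ℓ j k, Reβldd ℓ j k = (β k ℓ j).re)
    (At : Matrix (Fin n) (Fin n) ℝ)
    (hAt : At = (2 : ℝ) • diam (Mᵀ *ᵥ (J *ᵥ N)) +
      (2 : ℝ) • ∑ ℓ, Θ ℓ * Mᵀ * (M * θldd ℓ + J * M * Reβldd ℓ))
    (A : (Fin n → ℝ) → Matrix (Fin n) (Fin n) ℝ)
    (hA : ∀ E, A E = (2 : ℝ) • diam E + At)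
    (b : Fin n → ℝ)
    (hb : b = -((2 : ℝ) • (mhoᵀ *ᵥ col (Mᵀ * J * M * α))))
    (μ₀ : Fin n → ℝ)
    (P : Matrix (Fin n) (Fin n) ℝ) (hPsymm : P.IsSymm) (hP : P.PosSemidef)
    (F : Matrix (Fin ν) (Fin n) ℝ) (hFP : F * hP.sqrt ≠ 0)
    (S : Matrix (Fin n) (Fin n) ℝ) (hS : S = Fᵀ * F)
    (mhoC : Matrix (Fin n × Fin n) (Fin n) ℂ)
    (hmhoC : mhoC = mho.map (fun x : ℝ => (x : ℂ)))
    (G : Matrix (Fin n) (Fin n) ℂ)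
    (hG : G = (M.map (fun x : ℝ => (x : ℂ)))ᵀ * Ω * M.map (fun x : ℝ => (x : ℂ)))
    (Λ₀ : Matrix (Fin n) (Fin n) ℂ)
    (hΛ₀ : Λ₀ = (4 : ℂ) • (mhoCᵀ *
      ((α.map (fun x : ℝ => (x : ℂ)) + ∑ ℓ, ((μ₀ ℓ : ℝ) : ℂ) • β ℓ) ⊗ₖ G) * mhoC))
    (hpos : 0 < (Sᵀ * Λ₀.map Complex.re).trace)
    (Λdot : (Fin n → ℝ) → Matrix (Fin n) (Fin n) ℂ)
    (hΛdot : ∀ E, Λdot E = (4 : ℂ) • (mhoCᵀ *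
      ((∑ ℓ, (((A E *ᵥ μ₀ + b) ℓ : ℝ) : ℂ) • β ℓ) ⊗ₖ G) * mhoC))
    (g : (Fin n → ℝ) → ℝ)
    (hg : ∀ E, g E = (Sᵀ * ((2 : ℝ) • (A E * P * (A E)ᵀ) +
        (2 : ℝ) • (A E * (Λ₀.map Complex.re + (2 : ℝ) • vecMulVec μ₀ b)) +
        (Λdot E).map Complex.re)).trace +
      2 * ((F *ᵥ b) ⬝ᵥ (F *ᵥ b)))
    (R : Matrix (Fin n) (Fin n) ℝ) (hR : R = mhoᵀ * (P ⊗ₖ S) * mho)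
    (K : Fin n → ℝ)
    (hK : ∀ k, K k =
      (mhoᵀ *ᵥ col (S * (At * P + (1 / 2 : ℝ) • Λ₀.map Complex.re + vecMulVec b μ₀))) k +
      ((mho * S * mhoᵀ)ᵀ *
        ((∑ j, ((((∑ ℓ, μ₀ ℓ • Θ ℓ) j k : ℝ)) : ℂ) • β j) ⊗ₖ G).map Complex.re).trace)
    (τ' : ℝ)
    (hτ' : τ' = ((F * hP.sqrt)ᵀ * (F * hP.sqrt)).trace / (Sᵀ * Λ₀.map Complex.re).trace)
    (τ'' : (Fin n → ℝ) → ℝ)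
    (hτ'' : ∀ E, τ'' E = -(g E) * τ' ^ 2 / (Sᵀ * Λ₀.map Complex.re).trace)
    (τhat : ℝ → (Fin n → ℝ) → ℝ)
    (hτhat : ∀ ε E, τhat ε E = τ' * ε + τ'' E * ε ^ 2 / 2) :
    ∀ E : Fin n → ℝ,
      ((∀ E' : Fin n → ℝ, g E ≤ g E') ↔ (2 : ℝ) • (R *ᵥ E) + K = 0) ∧
      (∀ ε : ℝ, 0 < ε →
        ((∀ E' : Fin n → ℝ, τhat ε E' ≤ τhat ε E) ↔ (2 : ℝ) • (R *ᵥ E) + K = 0)) := by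
  intro E
  -- abbreviations
  set L : Matrix (Fin n) (Fin n) ℝ := Λ₀.map Complex.re with hLdef
  -- basic symmetries
  have hSsym : Sᵀ = S := by rw [hS, Matrix.transpose_mul, Matrix.transpose_transpose]
  have hPt : Pᵀ = P := hPsymm
  -- column-stacking lemmas
  have hcol_add : ∀ X Y, col (X + Y) = col X + col Y := by
    intro X Y; funext q
    obtain ⟨k, j⟩ := q
    simp [hcol]
  have hcol_smul : ∀ (c : ℝ) (X : Matrix (Fin n) (Fin n) ℝ), col (c • X) = c • col X := by
    intro c X; funext q
    obtain ⟨k, j⟩ := q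
    simp [hcol]
  have hcol_mulvec : ∀ u : Fin n → ℝ, mho *ᵥ u = col (diam u) := by
    intro u; funext q
    obtain ⟨ℓ, j⟩ := q
    simp [Matrix.mulVec, dotProduct, hmho, hcol, hdiam]
  have hLemD : ∀ Y Z : Matrix (Fin n) (Fin n) ℝ, col Y ⬝ᵥ col Z = (Yᵀ * Z).trace := by
    intro Y Z
    simp only [dotProduct, Fintype.sum_prod_type, Matrix.trace, Matrix.diag,
      Matrix.mul_apply, Matrix.transpose_apply]
    refine Finset.sum_congr rfl fun k _ => Finset.sum_congr rfl fun j _ => ?_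
    rw [hcol, hcol]
  have hLemA : ∀ (u : Fin n → ℝ) (X : Matrix (Fin n) (Fin n) ℝ),
      (S * diam u * Xᵀ).trace = (mhoᵀ *ᵥ col (S * X)) ⬝ᵥ u := by
    intro u X
    have h1 : (S * diam u * Xᵀ).trace = ((S * X)ᵀ * diam u).trace := by
      rw [Matrix.trace_mul_comm, Matrix.transpose_mul, hSsym]
      (first | rfl | simp only [Matrix.mul_assoc])
    rw [h1, ← hLemD, ← hcol_mulvec, Matrix.dotProduct_mulVec, Matrix.mulVec_transpose]
  have hkron_col : ∀ X : Matrix (Fin n) (Fin n) ℝ,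
      (P ⊗ₖ S) *ᵥ col X = col (S * X * Pᵀ) := by
    intro X; funext q
    obtain ⟨ℓ, j⟩ := q
    simp only [Matrix.mulVec, dotProduct, Fintype.sum_prod_type, hcol,
      Matrix.mul_apply, Matrix.kroneckerMap_apply, Matrix.transpose_apply]
    simp only [Finset.sum_mul, Finset.mul_sum]
    refine Finset.sum_congr rfl fun a _ => Finset.sum_congr rfl fun c _ => ?_
    ring
  have hRE : ∀ u : Fin n → ℝ, R *ᵥ u = mhoᵀ *ᵥ col (S * (diam u * P)) := by
    intro u
    rw [hR, ← Matrix.mulVec_mulVec, ← Matrix.mulVec_mulVec, hcol_mulvec, hkron_col, hPt]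
    rw [show S * diam u * P = S * (diam u * P) from by (first | rfl | simp only [Matrix.mul_assoc])]
  have hquad : ∀ u : Fin n → ℝ, (S * diam u * P * (diam u)ᵀ).trace = u ⬝ᵥ R *ᵥ u := by
    intro u
    have h1 : S * diam u * P * (diam u)ᵀ = S * diam u * (diam u * P)ᵀ := by
      rw [Matrix.transpose_mul, hPt]
      (first | rfl | simp only [Matrix.mul_assoc])
    rw [h1, hLemA u (diam u * P), ← hRE u]
    exact dotProduct_comm _ _
  have hRsym : Rᵀ = R := by
    rw [hR]
    simp only [Matrix.transpose_mul, Matrix.transpose_transpose]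
    rw [← Matrix.kroneckerMap_transpose, hPt, hSsym]
    (first | rfl | simp only [Matrix.mul_assoc])
  have hRpsd : ∀ x : Fin n → ℝ, 0 ≤ x ⬝ᵥ R *ᵥ x := by
    intro x
    rw [hR, ← Matrix.mulVec_mulVec, ← Matrix.mulVec_mulVec, Matrix.dotProduct_mulVec,
      Matrix.vecMul_transpose]
    set y := mho *ᵥ x with hy
    have hPQ : P = hP.sqrt * hP.sqrt := (stmt18_sqrt_mul_self hP).symm
    have hQt : (hP.sqrt)ᵀ = hP.sqrt := by
      exact stmt18_sqrt_transpose hP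
    have hfact : P ⊗ₖ S = ((hP.sqrt) ⊗ₖ F)ᵀ * ((hP.sqrt) ⊗ₖ F) := by
      rw [← Matrix.kroneckerMap_transpose, hQt]
      rw [show P ⊗ₖ S = (hP.sqrt * hP.sqrt) ⊗ₖ (Fᵀ * F) from by rw [← hPQ, ← hS]]
      exact Matrix.mul_kronecker_mul _ _ _ _
    rw [hfact, ← Matrix.mulVec_mulVec, Matrix.dotProduct_mulVec, Matrix.vecMul_transpose]
    exact Finset.sum_nonneg fun i _ => mul_self_nonneg _
  -- complex-to-real reduction
  have hreprod : ∀ (a b₂ : ℝ) (z : ℂ), ((a : ℂ) * z * (b₂ : ℂ)).re = a * z.re * b₂ := by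
    intro a b₂ z
    simp [Complex.mul_re]
  have hconjmove : ∀ W : Matrix (Fin n × Fin n) (Fin n × Fin n) ℂ,
      (mhoCᵀ * W * mhoC).map Complex.re = mhoᵀ * (W.map Complex.re) * mho := by
    intro W
    ext i j
    simp only [Matrix.map_apply, Matrix.mul_apply, Matrix.transpose_apply, hmhoC]
    rw [Complex.re_sum]
    refine Finset.sum_congr rfl fun q _ => ?_
    rw [Finset.sum_mul, Complex.re_sum, Finset.sum_mul]
    refine Finset.sum_congr rfl fun r _ => ?_
    rw [hreprod]
  have hmhoSsym : (mho * S * mhoᵀ)ᵀ = mho * S * mhoᵀ := by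
    simp only [Matrix.transpose_mul, Matrix.transpose_transpose, hSsym]
    (first | rfl | simp only [Matrix.mul_assoc])
  have htraceSW : ∀ W : Matrix (Fin n × Fin n) (Fin n × Fin n) ℂ,
      (Sᵀ * (mhoCᵀ * W * mhoC).map Complex.re).trace
        = ((mho * S * mhoᵀ)ᵀ * W.map Complex.re).trace := by
    intro W
    rw [hconjmove, hSsym, hmhoSsym]
    rw [show S * (mhoᵀ * W.map Complex.re * mho) = S * mhoᵀ * W.map Complex.re * mho from by
      (first | rfl | simp only [Matrix.mul_assoc])]
    rw [Matrix.trace_mul_comm]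
    (first | rfl | simp only [Matrix.mul_assoc])
  -- the per-direction diffusion coefficients
  set h : Fin n → ℝ := fun j => ((mho * S * mhoᵀ)ᵀ * ((β j ⊗ₖ G).map Complex.re)).trace
    with hhdef
  have hkron_lin : ∀ c : Fin n → ℝ,
      (((∑ j, ((c j : ℝ) : ℂ) • β j) ⊗ₖ G)).map Complex.re
        = ∑ j, c j • ((β j ⊗ₖ G).map Complex.re) := by
    intro c
    ext q r
    obtain ⟨q1, q2⟩ := q
    obtain ⟨r1, r2⟩ := r
    simp only [Matrix.map_apply, Matrix.kroneckerMap_apply, Matrix.sum_apply,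
      Matrix.smul_apply, smul_eq_mul, Finset.sum_mul]
    rw [Complex.re_sum]
    refine Finset.sum_congr rfl fun j _ => ?_
    rw [mul_assoc, Complex.re_ofReal_mul]
  have hLemF : ∀ c : Fin n → ℝ,
      ((mho * S * mhoᵀ)ᵀ * (((∑ j, ((c j : ℝ) : ℂ) • β j) ⊗ₖ G)).map Complex.re).trace
        = ∑ j, c j * h j := by
    intro c
    rw [hkron_lin, Finset.mul_sum, Matrix.trace_sum]
    refine Finset.sum_congr rfl fun j _ => ?_
    rw [Matrix.mul_smul, Matrix.trace_smul, smul_eq_mul]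
  have hmap4 : ∀ X : Matrix (Fin n) (Fin n) ℂ,
      ((4 : ℂ) • X).map Complex.re = (4 : ℝ) • X.map Complex.re := by
    intro X; ext i j
    simp [Matrix.map_apply, Complex.mul_re]
  have hT3 : ∀ u : Fin n → ℝ, (Sᵀ * (Λdot u).map Complex.re).trace
      = 4 * ∑ j, ((A u *ᵥ μ₀ + b) j) * h j := by
    intro u
    rw [hΛdot u, hmap4, Matrix.mul_smul, Matrix.trace_smul, smul_eq_mul, htraceSW, hLemF]
  -- symmetry of Re Λ₀
  have hβapp : ∀ ℓ i j, (starRingEnd ℂ) (β ℓ j i) = β ℓ i j := by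
    intro ℓ i j
    have := (hβ ℓ)
    rw [Matrix.IsHermitian] at this
    calc (starRingEnd ℂ) (β ℓ j i) = (β ℓ)ᴴ i j := rfl
    _ = β ℓ i j := by rw [this]
  have hJt : Jᵀ = -J := by
    rw [hJ]
    ext q r
    obtain ⟨a, i⟩ := q
    obtain ⟨c, k⟩ := r
    simp only [Matrix.transpose_apply, Matrix.kroneckerMap_apply, Matrix.neg_apply]
    fin_cases i <;> fin_cases k <;>
      simp [Matrix.one_apply, eq_comm] <;> ring
  have hΩherm : Ωᴴ = Ω := by
    rw [hΩ]
    rw [Matrix.conjTranspose_add, Matrix.conjTranspose_smul]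
    have hmapJ : (J.map (fun x : ℝ => (x : ℂ)))ᴴ = (Jᵀ).map (fun x : ℝ => (x : ℂ)) := by
      ext i j; simp [Matrix.conjTranspose_apply, Matrix.map_apply]
    rw [hmapJ, hJt]
    simp [Matrix.conjTranspose_one]
    ext i j
    simp [Matrix.map_apply]
  have hGherm : ∀ i j, (starRingEnd ℂ) (G j i) = G i j := by
    have hGH : Gᴴ = G := by
      rw [hG]
      rw [Matrix.conjTranspose_mul, Matrix.conjTranspose_mul]
      have h1 : (M.map (fun x : ℝ => (x : ℂ)))ᴴ = (M.map (fun x : ℝ => (x : ℂ)))ᵀ := by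
        ext i j; simp [Matrix.conjTranspose_apply, Matrix.map_apply]
      have h2 : ((M.map (fun x : ℝ => (x : ℂ)))ᵀ)ᴴ = M.map (fun x : ℝ => (x : ℂ)) := by
        ext i j; simp [Matrix.conjTranspose_apply, Matrix.map_apply]
      rw [h1, h2, hΩherm]
      (first | rfl | simp only [Matrix.mul_assoc])
    intro i j
    calc (starRingEnd ℂ) (G j i) = Gᴴ i j := rfl
    _ = G i j := by rw [hGH]
  have hmhoCH : mhoCᴴ = mhoCᵀ := by
    ext i j; simp [Matrix.conjTranspose_apply, hmhoC, Matrix.map_apply]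
  have hmhoCTH : (mhoCᵀ)ᴴ = mhoC := by
    ext i j; simp [Matrix.conjTranspose_apply, hmhoC, Matrix.map_apply]
  have hαe : ∀ a c : Fin n, α a c = α c a := by
    intro a c
    conv_lhs => rw [← hα]
    rfl
  have hWH : ((α.map (fun x : ℝ => (x : ℂ)) + ∑ ℓ, ((μ₀ ℓ : ℝ) : ℂ) • β ℓ) ⊗ₖ G)ᴴ
      = (α.map (fun x : ℝ => (x : ℂ)) + ∑ ℓ, ((μ₀ ℓ : ℝ) : ℂ) • β ℓ) ⊗ₖ G := by
    ext q r
    obtain ⟨q1, q2⟩ := q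
    obtain ⟨r1, r2⟩ := r
    simp only [Matrix.conjTranspose_apply, Complex.star_def, Matrix.kroneckerMap_apply,
      _root_.map_mul]
    rw [hGherm]
    congr 1
    simp only [Matrix.add_apply, Matrix.map_apply, Matrix.sum_apply, Matrix.smul_apply,
      smul_eq_mul, map_add, map_sum, _root_.map_mul, Complex.conj_ofReal, hβapp]
    rw [hαe r1 q1]
  have hΛH : Λ₀ᴴ = Λ₀ := by
    rw [hΛ₀]
    rw [Matrix.conjTranspose_smul, Matrix.conjTranspose_mul, Matrix.conjTranspose_mul]
    rw [hmhoCH, hWH, hmhoCTH]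
    simp only [Matrix.mul_assoc, star_ofNat]
  have hLsym : Lᵀ = L := by
    ext i j
    simp only [Matrix.transpose_apply, hLdef, Matrix.map_apply]
    calc (Λ₀ j i).re = ((starRingEnd ℂ) (Λ₀ j i)).re := (Complex.conj_re _).symm
    _ = (Λ₀ᴴ i j).re := rfl
    _ = (Λ₀ i j).re := by rw [hΛH]
  -- the linear coefficient
  set T : Fin n → Fin n → ℝ := fun j k => ∑ ℓ, μ₀ ℓ * Θ ℓ j k with hTdef
  have hKk : ∀ k, K k =
      (mhoᵀ *ᵥ col (S * (At * P + (1 / 2 : ℝ) • L + vecMulVec b μ₀))) k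
        + ∑ j, T j k * h j := by
    intro k
    rw [hK k]
    congr 1
    have h2 := hLemF (fun j => ((∑ ℓ, μ₀ ℓ • Θ ℓ) j k : ℝ))
    rw [h2]
    refine Finset.sum_congr rfl fun j _ => ?_
    congr 1
    rw [hTdef]
    simp [Matrix.sum_apply]
  have hDmu' : ∀ u : Fin n → ℝ, ∀ j, (diam u *ᵥ μ₀) j = ∑ k, T j k * u k := by
    intro u j
    simp only [Matrix.mulVec, dotProduct, hdiam, hTdef, Finset.sum_mul, Finset.mul_sum]
    rw [Finset.sum_comm]
    refine Finset.sum_congr rfl fun k _ => Finset.sum_congr rfl fun ℓ _ => ?_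
    ring
  have hDmu : ∀ u : Fin n → ℝ, ∑ j, (diam u *ᵥ μ₀) j * h j = ∑ k, (∑ j, T j k * h j) * u k := by
    intro u
    simp only [hDmu', Finset.sum_mul]
    rw [Finset.sum_comm]
    refine Finset.sum_congr rfl fun k _ => Finset.sum_congr rfl fun j _ => ?_
    ring
  -- main quadratic expansion of g
  set lin : Matrix (Fin n) (Fin n) ℝ → (Fin n → ℝ) := fun X => mhoᵀ *ᵥ col (S * X) with hlin
  have p1 : ∀ u : Fin n → ℝ, (Sᵀ * (A u * P * (A u)ᵀ)).trace
      = 4 * (u ⬝ᵥ R *ᵥ u) + 4 * (lin (At * P) ⬝ᵥ u) + (Sᵀ * (At * P * Atᵀ)).trace := by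
    intro u
    rw [hSsym]
    have hXp : A u * P * (A u)ᵀ = (4 : ℝ) • (diam u * P * (diam u)ᵀ)
        + (2 : ℝ) • (diam u * P * Atᵀ) + ((2 : ℝ) • (At * P * (diam u)ᵀ) + At * P * Atᵀ) := by
      rw [hA u]
      simp only [Matrix.transpose_add, Matrix.transpose_smul, add_mul, Matrix.mul_add,
        smul_mul_assoc, Matrix.mul_smul, smul_smul]
      norm_num
      module
    rw [hXp]
    simp only [Matrix.mul_add, Matrix.mul_smul, Matrix.trace_add, Matrix.trace_smul,
      smul_eq_mul]
    have q1 : (S * (diam u * P * (diam u)ᵀ)).trace = u ⬝ᵥ R *ᵥ u := by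
      rw [show S * (diam u * P * (diam u)ᵀ) = S * diam u * P * (diam u)ᵀ from by
        simp only [Matrix.mul_assoc]]
      exact hquad u
    have q2 : (S * (diam u * P * Atᵀ)).trace = lin (At * P) ⬝ᵥ u := by
      rw [show S * (diam u * P * Atᵀ) = S * diam u * (At * P)ᵀ from by
        rw [Matrix.transpose_mul, hPt]
        simp only [Matrix.mul_assoc]]
      exact hLemA u (At * P)
    have q3 : (S * (At * P * (diam u)ᵀ)).trace = lin (At * P) ⬝ᵥ u := by
      have e0 : (S * (At * P * (diam u)ᵀ)).trace = ((S * (At * P * (diam u)ᵀ))ᵀ).trace :=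
        (Matrix.trace_transpose _).symm
      rw [e0, show (S * (At * P * (diam u)ᵀ))ᵀ = diam u * (At * P)ᵀ * S from by
        simp only [Matrix.transpose_mul, Matrix.transpose_transpose, hSsym,
          Matrix.mul_assoc]]
      rw [Matrix.trace_mul_comm]
      rw [show S * (diam u * (At * P)ᵀ) = S * diam u * (At * P)ᵀ from by
        simp only [Matrix.mul_assoc]]
      exact hLemA u (At * P)
    rw [q1, q2, q3]
    ring
  have hvmvT : (vecMulVec b μ₀)ᵀ = vecMulVec μ₀ b := by
    ext i j
    simp [Matrix.vecMulVec_apply, mul_comm]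
  have p2 : ∀ u : Fin n → ℝ, (Sᵀ * (A u * (L + (2 : ℝ) • vecMulVec μ₀ b))).trace
      = 2 * (lin L ⬝ᵥ u) + 4 * (lin (vecMulVec b μ₀) ⬝ᵥ u)
        + (Sᵀ * (At * (L + (2 : ℝ) • vecMulVec μ₀ b))).trace := by
    intro u
    rw [hSsym]
    have hX : A u * (L + (2 : ℝ) • vecMulVec μ₀ b) = (2 : ℝ) • (diam u * L)
        + (4 : ℝ) • (diam u * vecMulVec μ₀ b) + At * (L + (2 : ℝ) • vecMulVec μ₀ b) := by
      rw [hA u]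
      simp only [add_mul, Matrix.mul_add, smul_mul_assoc, Matrix.mul_smul, smul_smul]
      norm_num
      module
    rw [hX]
    simp only [Matrix.mul_add, Matrix.mul_smul, Matrix.trace_add, Matrix.trace_smul,
      smul_eq_mul]
    have t1 : (S * (diam u * L)).trace = lin L ⬝ᵥ u := by
      rw [show S * (diam u * L) = S * diam u * Lᵀ from by
        rw [hLsym, Matrix.mul_assoc]]
      exact hLemA u L
    have t2 : (S * (diam u * vecMulVec μ₀ b)).trace = lin (vecMulVec b μ₀) ⬝ᵥ u := by
      rw [show S * (diam u * vecMulVec μ₀ b) = S * diam u * (vecMulVec b μ₀)ᵀ from by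
        rw [hvmvT, Matrix.mul_assoc]]
      exact hLemA u (vecMulVec b μ₀)
    rw [t1, t2]
  have p3 : ∀ u : Fin n → ℝ, (Sᵀ * (Λdot u).map Complex.re).trace
      = 8 * ((fun k => ∑ j, T j k * h j) ⬝ᵥ u) + 4 * ∑ j, ((At *ᵥ μ₀ + b) j) * h j := by
    intro u
    rw [hT3 u]
    have hsplit : ∀ j, (A u *ᵥ μ₀ + b) j = 2 * (diam u *ᵥ μ₀) j + (At *ᵥ μ₀ + b) j := by
      intro j
      rw [hA u, Matrix.add_mulVec, Matrix.smul_mulVec]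
      simp only [Pi.add_apply, Pi.smul_apply, smul_eq_mul]
      ring
    have e1 : ∑ j, ((A u *ᵥ μ₀ + b) j) * h j
        = 2 * (∑ j, (diam u *ᵥ μ₀) j * h j) + ∑ j, ((At *ᵥ μ₀ + b) j) * h j := by
      rw [Finset.mul_sum, ← Finset.sum_add_distrib]
      refine Finset.sum_congr rfl fun j _ => ?_
      rw [hsplit j]
      ring
    rw [e1, hDmu u]
    rw [show (fun k => ∑ j, T j k * h j) ⬝ᵥ u = ∑ k, (∑ j, T j k * h j) * u k from rfl]
    ring
  set C : ℝ := 2 * (Sᵀ * (At * P * Atᵀ)).trace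
      + 2 * (Sᵀ * (At * (L + (2 : ℝ) • vecMulVec μ₀ b))).trace
      + 4 * ∑ j, ((At *ᵥ μ₀ + b) j) * h j
      + 2 * ((F *ᵥ b) ⬝ᵥ (F *ᵥ b)) with hC
  have hKfun : ∀ k, K k = lin (At * P) k + (1 / 2) * lin L k
      + lin (vecMulVec b μ₀) k + (∑ j, T j k * h j) := by
    intro k
    rw [hKk k]
    have e : (mhoᵀ *ᵥ col (S * (At * P + (1 / 2 : ℝ) • L + vecMulVec b μ₀))) k
        = lin (At * P) k + (1 / 2) * lin L k + lin (vecMulVec b μ₀) k := by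
      rw [show S * (At * P + (1 / 2 : ℝ) • L + vecMulVec b μ₀)
          = S * (At * P) + (1 / 2 : ℝ) • (S * L) + S * vecMulVec b μ₀ from by
        rw [Matrix.mul_add, Matrix.mul_add, Matrix.mul_smul]]
      rw [hcol_add, hcol_add, hcol_smul, Matrix.mulVec_add, Matrix.mulVec_add,
        Matrix.mulVec_smul]
      simp only [Pi.add_apply, Pi.smul_apply, smul_eq_mul]
      rfl
    rw [e]
  have hgq : ∀ u : Fin n → ℝ, g u = 8 * (u ⬝ᵥ R *ᵥ u) + 8 * (K ⬝ᵥ u) + C := by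
    intro u
    rw [hg u]
    rw [Matrix.mul_add, Matrix.mul_add, Matrix.trace_add, Matrix.trace_add,
      Matrix.mul_smul, Matrix.mul_smul, Matrix.trace_smul, Matrix.trace_smul,
      smul_eq_mul, smul_eq_mul]
    rw [p1 u, p2 u, p3 u]
    have hKdot : K ⬝ᵥ u = (lin (At * P) ⬝ᵥ u) + (1 / 2) * (lin L ⬝ᵥ u)
        + (lin (vecMulVec b μ₀) ⬝ᵥ u) + ((fun k => ∑ j, T j k * h j) ⬝ᵥ u) := by
      simp only [dotProduct, Finset.mul_sum, ← Finset.sum_add_distrib]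
      refine Finset.sum_congr rfl fun k _ => ?_
      rw [hKfun k]
      ring
    rw [hKdot, hC]
    ring
  -- positivity facts
  have hd : 0 < (Sᵀ * L).trace := hpos
  have hnum : 0 < ((F * hP.sqrt)ᵀ * (F * hP.sqrt)).trace := by
    set X := F * hP.sqrt with hXdef
    have hex : ∃ i j, X i j ≠ 0 := by
      by_contra hc
      push_neg at hc
      exact hFP (by ext i j; simpa using hc i j)
    obtain ⟨i0, j0, hij⟩ := hex
    have htr : (Xᵀ * X).trace = ∑ j, ∑ i, X i j * X i j := by
      simp [Matrix.trace, Matrix.diag, Matrix.mul_apply]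
    rw [htr]
    have hterm : ∀ j ∈ Finset.univ (α := Fin n), 0 ≤ ∑ i, X i j * X i j :=
      fun j _ => Finset.sum_nonneg fun i _ => mul_self_nonneg _
    refine Finset.sum_pos' hterm ⟨j0, Finset.mem_univ _, ?_⟩
    refine Finset.sum_pos' (fun i _ => mul_self_nonneg _) ⟨i0, Finset.mem_univ _, ?_⟩
    exact mul_self_pos.mpr hij
  have hτpos : 0 < τ' := by
    rw [hτ']
    exact div_pos hnum hpos
  have hmain : (∀ E' : Fin n → ℝ, g E ≤ g E') ↔ (2 : ℝ) • (R *ᵥ E) + K = 0 :=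
    stmt18_quad_iff R hRsym hRpsd K C g hgq E
  refine ⟨hmain, fun ε hε => ?_⟩
  set c2 : ℝ := τ' ^ 2 / (Sᵀ * L).trace * ε ^ 2 / 2 with hc2
  have hτform : ∀ u : Fin n → ℝ, τhat ε u = τ' * ε - g u * c2 := by
    intro u
    rw [hτhat, hτ'' u, hc2]
    ring
  have hcpos : 0 < c2 := by
    rw [hc2]
    have h1 : 0 < τ' ^ 2 := pow_pos hτpos 2
    have h2 : 0 < ε ^ 2 := pow_pos hε 2
    positivity
  have hmono : (∀ E' : Fin n → ℝ, τhat ε E' ≤ τhat ε E) ↔ (∀ E' : Fin n → ℝ, g E ≤ g E') := by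
    constructor
    · intro hτm E'
      have h0 := hτm E'
      rw [hτform E', hτform E] at h0
      have h1 : g E * c2 ≤ g E' * c2 := by linarith
      exact le_of_mul_le_mul_right h1 hcpos
    · intro hgm E'
      rw [hτform E', hτform E]
      have h1 : g E * c2 ≤ g E' * c2 := mul_le_mul_of_nonneg_right (hgm E') hcpos.le
      linarith
  rw [hmono]
  exact hmain
end

section
/- Let n₁, n₂ ≥ 1 and n := n₁ + n₂ + n₁n₂. Let R ∈ ℝ^{n×n} be symmetric positive semidefinite and K ∈ ℝⁿ, and define the convex quadratic objective g(E) := 8(EᵀRE + KᵀE) for E ∈ ℝⁿ (whose gradient is 8(2RE + K), the form taken by the gradient of the approximate-decoherence-time objective Δ̈(0) for the interconnection of two quantum systems). Partition E = (E⁽¹⁾; E⁽²⁾; E⁽¹²⁾) into blocks of sizes n₁, n₂, n₁n₂; write the last n₁n₂ rows of R as the block row [R₁ R₂ R₁₂] with R₁ ∈ ℝ^{n₁n₂×n₁}, R₂ ∈ ℝ^{n₁n₂×n₂}, R₁₂ ∈ ℝ^{n₁n₂×n₁n₂}, and let K₁₂ ∈ ℝ^{n₁n₂} be the last n₁n₂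 entries of K. Fix E⁽¹⁾ ∈ ℝ^{n₁} and E⁽²⁾ ∈ ℝ^{n₂}. Then E⁽¹²⁾ ∈ ℝ^{n₁n₂} is a global minimizer of the function x ↦ g(E⁽¹⁾; E⁽²⁾; x) over ℝ^{n₁n₂} if and only if 2R₁₂E⁽¹²⁾ + Q = 0, where Q := K₁₂ + 2R₁E⁽¹⁾ + 2R₂E⁽²⁾. -/
open Matrix

/-- Theorem 2 of the paper: with the augmented index set partitioned as
`Fin n₁ ⊕ Fin n₂ ⊕ Fin (n₁n₂)` (so `n = n₁ + n₂ + n₁n₂`), `R ⪰ 0` symmetric, `K ∈ ℝⁿ`,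
and the convex quadratic `g(E) := 8(EᵀRE + KᵀE)`, where the last `n₁n₂` rows of `R`
form the block row `[R₁ R₂ R₁₂]` and `K₁₂` is the last block of `K`: for fixed `E⁽¹⁾`,
`E⁽²⁾`, the vector `E⁽¹²⁾` is a global minimizer of `x ↦ g(E⁽¹⁾; E⁽²⁾; x)` iff
`2R₁₂E⁽¹²⁾ + Q = 0` with `Q := K₁₂ + 2R₁E⁽¹⁾ + 2R₂E⁽²⁾`. -/
theorem stmt_19 (n₁ n₂ : ℕ) (hn₁ : 1 ≤ n₁) (hn₂ : 1 ≤ n₂)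
    (R : Matrix (Fin n₁ ⊕ Fin n₂ ⊕ Fin (n₁ * n₂)) (Fin n₁ ⊕ Fin n₂ ⊕ Fin (n₁ * n₂)) ℝ)
    (hRsymm : R.IsSymm) (hRpsd : R.PosSemidef)
    (K : Fin n₁ ⊕ Fin n₂ ⊕ Fin (n₁ * n₂) → ℝ)
    (g : (Fin n₁ ⊕ Fin n₂ ⊕ Fin (n₁ * n₂) → ℝ) → ℝ)
    (hg : ∀ E, g E = 8 * (E ⬝ᵥ (R *ᵥ E) + K ⬝ᵥ E))
    (R₁ : Matrix (Fin (n₁ * n₂)) (Fin n₁) ℝ)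
    (hR₁ : ∀ i j, R₁ i j = R (Sum.inr (Sum.inr i)) (Sum.inl j))
    (R₂ : Matrix (Fin (n₁ * n₂)) (Fin n₂) ℝ)
    (hR₂ : ∀ i j, R₂ i j = R (Sum.inr (Sum.inr i)) (Sum.inr (Sum.inl j)))
    (R₁₂ : Matrix (Fin (n₁ * n₂)) (Fin (n₁ * n₂)) ℝ)
    (hR₁₂ : ∀ i j, R₁₂ i j = R (Sum.inr (Sum.inr i)) (Sum.inr (Sum.inr j)))
    (K₁₂ : Fin (n₁ * n₂) → ℝ)
    (hK₁₂ : ∀ i, K₁₂ i = K (Sum.inr (Sum.inr i)))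
    (E₁ : Fin n₁ → ℝ) (E₂ : Fin n₂ → ℝ)
    (Q : Fin (n₁ * n₂) → ℝ)
    (hQ : Q = K₁₂ + (2 : ℝ) • (R₁ *ᵥ E₁) + (2 : ℝ) • (R₂ *ᵥ E₂)) :
    ∀ E₁₂ : Fin (n₁ * n₂) → ℝ,
      (∀ x : Fin (n₁ * n₂) → ℝ,
          g (Sum.elim E₁ (Sum.elim E₂ E₁₂)) ≤ g (Sum.elim E₁ (Sum.elim E₂ x))) ↔
        (2 : ℝ) • (R₁₂ *ᵥ E₁₂) + Q = 0 := by
  intro E₁₂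
  classical
  set a : Fin n₁ ⊕ Fin n₂ ⊕ Fin (n₁ * n₂) → ℝ := Sum.elim E₁ (Sum.elim E₂ 0) with ha
  set b : (Fin (n₁ * n₂) → ℝ) → (Fin n₁ ⊕ Fin n₂ ⊕ Fin (n₁ * n₂) → ℝ) :=
    fun x => Sum.elim 0 (Sum.elim 0 x) with hbdef
  have hEb : ∀ x : Fin (n₁ * n₂) → ℝ, Sum.elim E₁ (Sum.elim E₂ x) = a + b x := by
    intro x; funext i; rcases i with i | i | i <;> simp [ha, hbdef]
  have hbdot : ∀ (x : Fin (n₁ * n₂) → ℝ) (w : Fin n₁ ⊕ Fin n₂ ⊕ Fin (n₁ * n₂) → ℝ),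
      b x ⬝ᵥ w = x ⬝ᵥ (fun i => w (Sum.inr (Sum.inr i))) := by
    intro x w
    simp [hbdef, dotProduct, Fintype.sum_sum_type]
  have hRrow : ∀ (u₁ : Fin n₁ → ℝ) (u₂ : Fin n₂ → ℝ) (y : Fin (n₁ * n₂) → ℝ)
      (i : Fin (n₁ * n₂)),
      (R *ᵥ Sum.elim u₁ (Sum.elim u₂ y)) (Sum.inr (Sum.inr i))
        = (R₁ *ᵥ u₁) i + (R₂ *ᵥ u₂) i + (R₁₂ *ᵥ y) i := by
    intro u₁ u₂ y i
    simp [mulVec, dotProduct, Fintype.sum_sum_type, hR₁, hR₂, hR₁₂]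
    ring
  have hsym : ∀ (u w : Fin n₁ ⊕ Fin n₂ ⊕ Fin (n₁ * n₂) → ℝ),
      u ⬝ᵥ (R *ᵥ w) = w ⬝ᵥ (R *ᵥ u) := by
    intro u w
    rw [dotProduct_mulVec, ← mulVec_transpose, hRsymm.eq, dotProduct_comm]
  have hbb : ∀ u w : Fin (n₁ * n₂) → ℝ, b u ⬝ᵥ (R *ᵥ b w) = u ⬝ᵥ (R₁₂ *ᵥ w) := by
    intro u w
    rw [hbdot]
    congr 1; funext i
    simp only [hbdef]
    rw [hRrow 0 0 w i]; simp
  have hba : ∀ u : Fin (n₁ * n₂) → ℝ,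
      b u ⬝ᵥ (R *ᵥ a) = u ⬝ᵥ (R₁ *ᵥ E₁) + u ⬝ᵥ (R₂ *ᵥ E₂) := by
    intro u
    rw [hbdot]
    have h0 : (fun i => (R *ᵥ a) (Sum.inr (Sum.inr i))) = (R₁ *ᵥ E₁) + (R₂ *ᵥ E₂) := by
      funext i; rw [ha, hRrow]; simp
    rw [h0, dotProduct_add]
  have hKb : ∀ u : Fin (n₁ * n₂) → ℝ, K ⬝ᵥ b u = u ⬝ᵥ K₁₂ := by
    intro u
    rw [dotProduct_comm, hbdot]
    congr 1; funext i; rw [hK₁₂]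
  have hR₁₂symm : ∀ u w : Fin (n₁ * n₂) → ℝ,
      u ⬝ᵥ (R₁₂ *ᵥ w) = w ⬝ᵥ (R₁₂ *ᵥ u) := by
    intro u w; rw [← hbb, hsym, hbb]
  have hpsd : ∀ u : Fin (n₁ * n₂) → ℝ, 0 ≤ u ⬝ᵥ (R₁₂ *ᵥ u) := by
    intro u
    have h0 := hRpsd.dotProduct_mulVec_nonneg (b u)
    rwa [star_trivial, hbb] at h0
  -- the reduced objective
  set f : (Fin (n₁ * n₂) → ℝ) → ℝ := fun x => x ⬝ᵥ (R₁₂ *ᵥ x) + Q ⬝ᵥ x with hf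
  have hfval : ∀ x, f x = x ⬝ᵥ (R₁₂ *ᵥ x) + Q ⬝ᵥ x := fun x => rfl
  have hQx : ∀ z : Fin (n₁ * n₂) → ℝ,
      Q ⬝ᵥ z = z ⬝ᵥ K₁₂ + 2 * (z ⬝ᵥ (R₁ *ᵥ E₁)) + 2 * (z ⬝ᵥ (R₂ *ᵥ E₂)) := by
    intro z
    rw [hQ, add_dotProduct, add_dotProduct, smul_dotProduct, smul_dotProduct,
      dotProduct_comm K₁₂ z, dotProduct_comm (R₁ *ᵥ E₁) z, dotProduct_comm (R₂ *ᵥ E₂) z]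
    simp [smul_eq_mul]
  have hg' : ∀ x : Fin (n₁ * n₂) → ℝ,
      g (Sum.elim E₁ (Sum.elim E₂ x)) = g a + 8 * f x := by
    intro x
    rw [hfval x, hQx x, hg, hg, hEb x]
    have hab : a ⬝ᵥ (R *ᵥ b x) = b x ⬝ᵥ (R *ᵥ a) := hsym a (b x)
    simp only [mulVec_add, dotProduct_add, add_dotProduct]
    rw [hab, hbb x x, hba x, hKb x]
    ring
  have hle : ∀ x : Fin (n₁ * n₂) → ℝ,
      (g (Sum.elim E₁ (Sum.elim E₂ E₁₂)) ≤ g (Sum.elim E₁ (Sum.elim E₂ x))) ↔ f E₁₂ ≤ f x := by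
    intro x
    rw [hg' E₁₂, hg' x]
    constructor
    · intro h; linarith
    · intro h; linarith
  set v : Fin (n₁ * n₂) → ℝ := (2 : ℝ) • (R₁₂ *ᵥ E₁₂) + Q with hv
  have hexp : ∀ d : Fin (n₁ * n₂) → ℝ,
      f (E₁₂ + d) = f E₁₂ + (d ⬝ᵥ (R₁₂ *ᵥ d) + d ⬝ᵥ v) := by
    intro d
    rw [hfval, hfval]
    simp only [mulVec_add, dotProduct_add, add_dotProduct]
    rw [hR₁₂symm E₁₂ d, hv, dotProduct_add, dotProduct_smul, dotProduct_comm d Q]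
    simp only [smul_eq_mul]
    ring
  constructor
  · intro h
    have h' : ∀ d : Fin (n₁ * n₂) → ℝ, 0 ≤ d ⬝ᵥ (R₁₂ *ᵥ d) + d ⬝ᵥ v := by
      intro d
      have h1 := (hle (E₁₂ + d)).mp (h (E₁₂ + d))
      rw [hexp] at h1
      linarith
    have hvt : ∀ t : ℝ, 0 < t → v ⬝ᵥ v ≤ t * (v ⬝ᵥ (R₁₂ *ᵥ v)) := by
      intro t ht
      have h2 := h' ((-t) • v)
      rw [smul_dotProduct, mulVec_smul, dotProduct_smul, smul_dotProduct] at h2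
      simp only [smul_eq_mul] at h2
      nlinarith [h2, ht]
    have hc : 0 ≤ v ⬝ᵥ (R₁₂ *ᵥ v) := hpsd v
    have hvv : v ⬝ᵥ v ≤ 0 := by
      by_contra hpos
      push_neg at hpos
      have hd : (0:ℝ) < 2 * (v ⬝ᵥ (R₁₂ *ᵥ v) + 1) := by linarith
      have h3 := hvt ((v ⬝ᵥ v) / (2 * (v ⬝ᵥ (R₁₂ *ᵥ v) + 1))) (div_pos hpos hd)
      rw [div_mul_eq_mul_div, le_div_iff₀ hd] at h3
      nlinarith
    have hnn : 0 ≤ v ⬝ᵥ v := by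
      simp only [dotProduct]
      exact Finset.sum_nonneg fun i _ => mul_self_nonneg _
    exact dotProduct_self_eq_zero.mp (le_antisymm hvv hnn)
  · intro hv0 x
    rw [hle]
    have hx : x = E₁₂ + (x - E₁₂) := by ring
    rw [hx, hexp, hv0]
    simp only [dotProduct_zero, add_zero]
    have := hpsd (x - E₁₂)
    linarith
end
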